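/- Let k ≥ 0 and consider S = Q[x,y]. The derivations θ_1 = x^{2k+1} ∂_x + y^{2k+1} ∂_y and θ_2 = (x^2 y^{2k+1} − y^{2k+3}) ∂_y satisfy: θ_i(x) is divisible by x^{2k+1}, θ_i(y) is divisible by y^{2k+1}, θ_i(x+y) is divisible by (x+y), and θ_i(x−y) is divisible by (x−y), for i = 1,2. The determinant of their coefficient matrix equals (x−y)(x+y) x^{2k+1} y^{2k+1}. Hence the multiarrangement with defining polynomial x^{2k+1} y^{2k+1} (x+y)(x−y) is free with exponents (2k+1, 2k+3). -/

import Mathlib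

noncomputable section
open MvPolynomial

/-- polynomial ring in two variables `x, y` -/
abbrev S₂ : Type := MvPolynomial (Fin 2) ℚ

def px : S₂ := X 0
def py : S₂ := X 1

/-- The module of multiderivations of the rank-2 multiarrangement with defining
polynomial `x^a y^b (x+y)^c (x-y)^d`, where a derivation `θ` is recorded by the
pair `(θ(x), θ(y))`. -/
def Dmulti (a b c d : ℕ) : Set (S₂ × S₂) :=
  {θ | px ^ a ∣ θ.1 ∧ py ^ b ∣ θ.2 ∧ (px + py) ^ c ∣ (θ.1 + θ.2) ∧
    (px - py) ^ d ∣ (θ.1 - θ.2)}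

-- the equivalence S₂ ≃ (ℚ[x])[y]
lemma aux_prime_add : Prime (px + py) := by
  refine (MulEquiv.prime_iff (MvPolynomial.finSuccEquiv ℚ 1).toMulEquiv).mp ?_
  have h1 : (MvPolynomial.finSuccEquiv ℚ 1).toMulEquiv (px + py)
      = Polynomial.X - Polynomial.C (-(X 0)) := by
    show (MvPolynomial.finSuccEquiv ℚ 1) (px + py) = _
    rw [map_add, show px = X 0 from rfl, show py = X (Fin.succ 0) from rfl,
      MvPolynomial.finSuccEquiv_X_zero, MvPolynomial.finSuccEquiv_X_succ,
      map_neg, sub_neg_eq_add]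
  rw [h1]
  exact Polynomial.prime_X_sub_C _

lemma aux_prime_sub : Prime (px - py) := by
  refine (MulEquiv.prime_iff (MvPolynomial.finSuccEquiv ℚ 1).toMulEquiv).mp ?_
  have h1 : (MvPolynomial.finSuccEquiv ℚ 1).toMulEquiv (px - py)
      = Polynomial.X - Polynomial.C (X 0) := by
    show (MvPolynomial.finSuccEquiv ℚ 1) (px - py) = _
    rw [map_sub, show px = X 0 from rfl, show py = X (Fin.succ 0) from rfl,
      MvPolynomial.finSuccEquiv_X_zero, MvPolynomial.finSuccEquiv_X_succ]
  rw [h1]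
  exact Polynomial.prime_X_sub_C _

def φev : S₂ →ₐ[ℚ] Polynomial ℚ := aeval ![Polynomial.X, 1]

lemma φev_px : φev px = Polynomial.X := by simp [φev, px]
lemma φev_py : φev py = 1 := by simp [φev, py]

lemma aux_Xadd1_not_unit : ¬ IsUnit (Polynomial.X + 1 : Polynomial ℚ) := by
  intro h
  have := Polynomial.degree_eq_zero_of_isUnit h
  rw [show (Polynomial.X + 1 : Polynomial ℚ) = Polynomial.X + Polynomial.C 1 by simp,
    Polynomial.degree_X_add_C] at this
  exact one_ne_zero this

lemma aux_Xsub1_not_unit : ¬ IsUnit (Polynomial.X - 1 : Polynomial ℚ) := by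
  intro h
  have := Polynomial.degree_eq_zero_of_isUnit h
  rw [show (Polynomial.X - 1 : Polynomial ℚ) = Polynomial.X - Polynomial.C 1 by simp,
    Polynomial.degree_X_sub_C] at this
  exact one_ne_zero this

lemma aux_add_not_dvd_py : ¬ (px + py) ∣ py := by
  intro h
  have := map_dvd φev h
  rw [map_add, φev_px, φev_py] at this
  exact aux_Xadd1_not_unit (isUnit_of_dvd_one this)

lemma aux_sub_not_dvd_py : ¬ (px - py) ∣ py := by
  intro h
  have := map_dvd φev h
  rw [map_sub, φev_px, φev_py] at this
  exact aux_Xsub1_not_unit (isUnit_of_dvd_one this)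

lemma aux_sub_not_dvd_add : ¬ (px - py) ∣ (px + py) := by
  intro h
  have h2 := map_dvd φev h
  rw [map_sub, map_add, φev_px, φev_py] at h2
  have h3 : (Polynomial.X - 1 : Polynomial ℚ) ∣ 2 := by
    have h := dvd_sub h2 (dvd_refl (Polynomial.X - 1))
    rwa [show (Polynomial.X + 1) - (Polynomial.X - 1) = (2 : Polynomial ℚ) by ring] at h
  have h4 : IsUnit (2 : Polynomial ℚ) := by
    rw [show (2 : Polynomial ℚ) = Polynomial.C 2 from (Polynomial.C_eq_natCast 2).symm.trans (by norm_num)]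
    exact Polynomial.isUnit_C.mpr (by norm_num)
  exact aux_Xsub1_not_unit (isUnit_of_dvd_unit h3 h4)

theorem stmt5 (k : ℕ) :
    let θ₁ : S₂ × S₂ := (px ^ (2 * k + 1), py ^ (2 * k + 1))
    let θ₂ : S₂ × S₂ := (0, px ^ 2 * py ^ (2 * k + 1) - py ^ (2 * k + 3))
    θ₁ ∈ Dmulti (2 * k + 1) (2 * k + 1) 1 1 ∧
    θ₂ ∈ Dmulti (2 * k + 1) (2 * k + 1) 1 1 ∧
    θ₁.1 * θ₂.2 - θ₁.2 * θ₂.1 =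
      (px - py) * (px + py) * px ^ (2 * k + 1) * py ^ (2 * k + 1) ∧
    (∀ θ ∈ Dmulti (2 * k + 1) (2 * k + 1) 1 1, ∃ f g : S₂, θ = f • θ₁ + g • θ₂) ∧
    (∀ f g : S₂, f • θ₁ + g • θ₂ = 0 → f = 0 ∧ g = 0) := by
  intro θ₁ θ₂
  have hodd : Odd (2 * k + 1) := ⟨k, by ring⟩
  have hfac : px ^ 2 * py ^ (2 * k + 1) - py ^ (2 * k + 3)
      = py ^ (2 * k + 1) * ((px + py) * (px - py)) := by ring
  refine ⟨?_, ?_, ?_, ?_, ?_⟩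
  · refine ⟨dvd_refl _, dvd_refl _, ?_, ?_⟩
    · simpa using hodd.add_dvd_pow_add_pow px py
    · simpa using sub_dvd_pow_sub_pow px py (2 * k + 1)
  · refine ⟨dvd_zero _, ⟨(px + py) * (px - py), hfac⟩, ?_, ?_⟩
    · rw [pow_one]
      refine ⟨py ^ (2 * k + 1) * (px - py), ?_⟩
      show (0 : S₂) + (px ^ 2 * py ^ (2 * k + 1) - py ^ (2 * k + 3)) = _
      linear_combination hfac
    · rw [pow_one]
      refine ⟨-(py ^ (2 * k + 1) * (px + py)), ?_⟩
      show (0 : S₂) - (px ^ 2 * py ^ (2 * k + 1) - py ^ (2 * k + 3)) = _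
      linear_combination -hfac
  · show px ^ (2 * k + 1) * (px ^ 2 * py ^ (2 * k + 1) - py ^ (2 * k + 3))
        - py ^ (2 * k + 1) * 0 = _
    ring
  · rintro ⟨P, Q⟩ ⟨hP, hQ, hc, hd⟩
    simp only [pow_one] at hc hd
    obtain ⟨f, hf0⟩ := hP
    have hf : P = px ^ (2 * k + 1) * f := hf0
    have hQ : py ^ (2 * k + 1) ∣ Q := hQ
    have hy : py ^ (2 * k + 1) ∣ Q - py ^ (2 * k + 1) * f :=
      dvd_sub hQ (Dvd.intro f rfl)
    have hplus : (px + py) ∣ Q - py ^ (2 * k + 1) * f := by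
      have h1 : (px + py) ∣ (px ^ (2 * k + 1) + py ^ (2 * k + 1)) * f :=
        Dvd.dvd.mul_right (hodd.add_dvd_pow_add_pow px py) f
      have h2 := dvd_sub hc h1
      convert h2 using 1
      linear_combination -hf
    have hminus : (px - py) ∣ Q - py ^ (2 * k + 1) * f := by
      have h1 : (px - py) ∣ (px ^ (2 * k + 1) - py ^ (2 * k + 1)) * f :=
        Dvd.dvd.mul_right (sub_dvd_pow_sub_pow px py _) f
      have h2 := dvd_sub h1 hd
      convert h2 using 1
      linear_combination hf
    obtain ⟨R₁, hR₁⟩ := hy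
    have hplus' : (px + py) ∣ R₁ := by
      rcases (aux_prime_add.2.2 _ _ (hR₁ ▸ hplus)) with h | h
      · exact absurd (aux_prime_add.dvd_of_dvd_pow h) aux_add_not_dvd_py
      · exact h
    obtain ⟨R₂, hR₂⟩ := hplus'
    have hminus' : (px - py) ∣ R₂ := by
      have : (px - py) ∣ (py ^ (2 * k + 1) * (px + py)) * R₂ := by
        rw [mul_assoc, ← hR₂, ← hR₁]; exact hminus
      rcases aux_prime_sub.2.2 _ _ this with h | h
      · rcases aux_prime_sub.2.2 _ _ h with h' | h'
        · exact absurd (aux_prime_sub.dvd_of_dvd_pow h') aux_sub_not_dvd_py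
        · exact absurd h' aux_sub_not_dvd_add
      · exact h
    obtain ⟨g, hg⟩ := hminus'
    refine ⟨f, g, ?_⟩
    have hQeq : Q = py ^ (2 * k + 1) * f
        + py ^ (2 * k + 1) * ((px + py) * ((px - py) * g)) := by
      rw [← hg, ← hR₂, ← hR₁]; ring
    show (P, Q) = _
    simp only [θ₁, θ₂, Prod.smul_mk, smul_eq_mul, Prod.mk_add_mk, mul_zero, add_zero,
      Prod.mk.injEq]
    constructor
    · rw [hf]; ring
    · rw [hQeq]; ring
  · intro f g h
    simp only [θ₁, θ₂, Prod.smul_mk, smul_eq_mul, Prod.mk_add_mk, mul_zero, add_zero,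
      Prod.mk.injEq, Prod.mk_eq_zero] at h
    obtain ⟨h1, h2⟩ := h
    have hf0 : f = 0 := by
      rcases mul_eq_zero.mp h1 with h | h
      · exact h
      · exact absurd h (pow_ne_zero _ (MvPolynomial.X_ne_zero 0))
    refine ⟨hf0, ?_⟩
    rw [hf0, zero_mul, zero_add] at h2
    rcases mul_eq_zero.mp h2 with h | h
    · exact h
    · exfalso
      rw [hfac] at h
      rcases mul_eq_zero.mp h with h' | h'
      · exact pow_ne_zero _ (MvPolynomial.X_ne_zero 1) h'
      · rcases mul_eq_zero.mp h' with h'' | h''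
        · exact aux_prime_add.ne_zero h''
        · exact aux_prime_sub.ne_zero h''

end
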